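/- arXiv:2301.09266 — 2 statements merged into one kernel-verified Lean document; each statement's English description precedes it below -/
import Mathlib

section
/- Define the anti-diagonal index of pixel (i,j) as d = i + j. For a TL-padded convolution with K_{k-1,k-1} = 1, the inverse value X_{i,j} is a function of Y_{i,j} and the values X_{i',j'} with i'+j' < i+j. In particular, any two pixels on the same anti-diagonal (i+j = i'+j', (i,j) ≠ (i',j')) have inverse values that do not depend on each other. -/
/-- TL-padded convolution of an `n × n` image with a `k × k` kernel. -/
def tlConv (n k : ℕ) (K : ℕ → ℕ → ℝ) (X : Fin n → Fin n → ℝ) (i j : Fin n) : ℝ :=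
  ∑ p ∈ Finset.range k, ∑ q ∈ Finset.range k,
    if p ≤ (i : ℕ) ∧ q ≤ (j : ℕ) then
      X ⟨(i : ℕ) - p, Nat.lt_of_le_of_lt (Nat.sub_le _ _) i.isLt⟩
        ⟨(j : ℕ) - q, Nat.lt_of_le_of_lt (Nat.sub_le _ _) j.isLt⟩ *
        K (k - 1 - p) (k - 1 - q)
    else 0

/-- The convolution matrix of the TL-padded convolution (row-major ordering). -/
def convMatrix (n k : ℕ) (K : ℕ → ℕ → ℝ) :
    Matrix (Fin n × Fin n) (Fin n × Fin n) ℝ := fun a b =>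
  if (b.1 : ℕ) ≤ (a.1 : ℕ) ∧ (b.2 : ℕ) ≤ (a.2 : ℕ) ∧
      (a.1 : ℕ) - (b.1 : ℕ) < k ∧ (a.2 : ℕ) - (b.2 : ℕ) < k then
    K (k - 1 - ((a.1 : ℕ) - (b.1 : ℕ))) (k - 1 - ((a.2 : ℕ) - (b.2 : ℕ)))
  else 0

/-- with `K (k-1) (k-1) = 1`, the inverse value `X i j` is a function of
`Y i j` and the values of `X` on pixels with strictly smaller anti-diagonal index
`i' + j' < i + j`; moreover two distinct pixels on the same anti-diagonal do not
depend on each other (the corresponding coefficient in the convolution is zero). -/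
theorem tlConv_antidiagonal_independence (n k : ℕ) (hk : 0 < k) (K : ℕ → ℕ → ℝ)
    (h1 : K (k - 1) (k - 1) = 1) :
    (∀ X X' : Fin n → Fin n → ℝ, ∀ i j : Fin n,
      (∀ a b : Fin n, (a : ℕ) + (b : ℕ) < (i : ℕ) + (j : ℕ) → X a b = X' a b) →
      tlConv n k K X i j = tlConv n k K X' i j → X i j = X' i j) ∧
    (∀ a b : Fin n × Fin n, a ≠ b →
      (a.1 : ℕ) + (a.2 : ℕ) = (b.1 : ℕ) + (b.2 : ℕ) →
      convMatrix n k K a b = 0) := by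
  constructor
  · intro X X' i j hX hY
    have hd : tlConv n k K X i j - tlConv n k K X' i j = X i j - X' i j := by
      unfold tlConv
      rw [← Finset.sum_sub_distrib]
      have hrow : ∀ p ∈ Finset.range k,
          ((∑ q ∈ Finset.range k,
            if p ≤ (i : ℕ) ∧ q ≤ (j : ℕ) then
              X ⟨(i : ℕ) - p, Nat.lt_of_le_of_lt (Nat.sub_le _ _) i.isLt⟩
                ⟨(j : ℕ) - q, Nat.lt_of_le_of_lt (Nat.sub_le _ _) j.isLt⟩ *
                K (k - 1 - p) (k - 1 - q)
            else 0) -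
          (∑ q ∈ Finset.range k,
            if p ≤ (i : ℕ) ∧ q ≤ (j : ℕ) then
              X' ⟨(i : ℕ) - p, Nat.lt_of_le_of_lt (Nat.sub_le _ _) i.isLt⟩
                ⟨(j : ℕ) - q, Nat.lt_of_le_of_lt (Nat.sub_le _ _) j.isLt⟩ *
                K (k - 1 - p) (k - 1 - q)
            else 0)) = if p = 0 then X i j - X' i j else 0 := by
        intro p hp
        rw [← Finset.sum_sub_distrib]
        have hterm : ∀ q ∈ Finset.range k,
            ((if p ≤ (i : ℕ) ∧ q ≤ (j : ℕ) then
              X ⟨(i : ℕ) - p, Nat.lt_of_le_of_lt (Nat.sub_le _ _) i.isLt⟩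
                ⟨(j : ℕ) - q, Nat.lt_of_le_of_lt (Nat.sub_le _ _) j.isLt⟩ *
                K (k - 1 - p) (k - 1 - q)
            else 0) -
            (if p ≤ (i : ℕ) ∧ q ≤ (j : ℕ) then
              X' ⟨(i : ℕ) - p, Nat.lt_of_le_of_lt (Nat.sub_le _ _) i.isLt⟩
                ⟨(j : ℕ) - q, Nat.lt_of_le_of_lt (Nat.sub_le _ _) j.isLt⟩ *
                K (k - 1 - p) (k - 1 - q)
            else 0)) = if p = 0 ∧ q = 0 then X i j - X' i j else 0 := by
          intro q hq
          by_cases hle : p ≤ (i : ℕ) ∧ q ≤ (j : ℕ)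
          · rw [if_pos hle, if_pos hle]
            by_cases h0 : p = 0 ∧ q = 0
            · obtain ⟨hp0, hq0⟩ := h0
              subst hp0; subst hq0
              rw [if_pos ⟨rfl, rfl⟩]
              have hi : (⟨(i : ℕ) - 0, Nat.lt_of_le_of_lt (Nat.sub_le _ _) i.isLt⟩ : Fin n) = i := by
                ext; simp
              have hj : (⟨(j : ℕ) - 0, Nat.lt_of_le_of_lt (Nat.sub_le _ _) j.isLt⟩ : Fin n) = j := by
                ext; simp
              rw [hi, hj]
              simp [h1]
            · rw [if_neg h0]
              have hlt : ((i : ℕ) - p) + ((j : ℕ) - q) < (i : ℕ) + (j : ℕ) := by omega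
              rw [hX _ _ hlt]
              ring
          · rw [if_neg hle, if_neg hle]
            have h0 : ¬ (p = 0 ∧ q = 0) := by
              rintro ⟨rfl, rfl⟩; exact hle ⟨Nat.zero_le _, Nat.zero_le _⟩
            rw [if_neg h0]
            ring
        rw [Finset.sum_congr rfl hterm]
        simp only [ite_and]
        by_cases hp0 : p = 0
        · subst hp0
          simp [Finset.sum_ite_eq' (Finset.range k) (0 : ℕ), Finset.mem_range, hk]
        · simp [hp0]
      rw [Finset.sum_congr rfl hrow]
      simp [Finset.sum_ite_eq' (Finset.range k) (0 : ℕ), Finset.mem_range, hk]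
    have := hY ▸ hd
    linarith [hd, hY]
  · intro a b hab hsum
    unfold convMatrix
    rw [if_neg]
    rintro ⟨h1', h2', -, -⟩
    apply hab
    have e1 : (a.1 : ℕ) = (b.1 : ℕ) := by omega
    have e2 : (a.2 : ℕ) = (b.2 : ℕ) := by omega
    exact Prod.ext (Fin.ext e1) (Fin.ext e2)
end

section
/- For the TL-padded convolution recursion X_{i,j} = Y_{i,j} − Σ_{(p,q)≠(0,0)} X_{i-p,j-q} K_{k-1-p,k-1-q}, strong induction on the anti-diagonal d = i+j shows the solution X exists, is unique, and each X_{i,j} is a linear function of {Y_{i',j'} : i' ≤ i, j' ≤ j}. -/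
lemma tlConv_eq (n k : ℕ) (hk : 0 < k) (K : ℕ → ℕ → ℝ) (h1 : K (k-1) (k-1) = 1)
    (X : Fin n → Fin n → ℝ) (i j : Fin n) :
    tlConv n k K X i j = X i j +
      ∑ pq ∈ ((Finset.range k ×ˢ Finset.range k).erase (0,0)),
        (if pq.1 ≤ (i:ℕ) ∧ pq.2 ≤ (j:ℕ) then
          X ⟨(i:ℕ) - pq.1, Nat.lt_of_le_of_lt (Nat.sub_le _ _) i.isLt⟩
            ⟨(j:ℕ) - pq.2, Nat.lt_of_le_of_lt (Nat.sub_le _ _) j.isLt⟩ *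
            K (k - 1 - pq.1) (k - 1 - pq.2)
        else 0) := by
  unfold tlConv
  rw [← Finset.sum_product']
  rw [← Finset.add_sum_erase _ _
    (show ((0:ℕ),(0:ℕ)) ∈ Finset.range k ×ˢ Finset.range k by simp [hk])]
  congr 1
  simp [h1]

lemma tlConv_vanish (n k : ℕ) (hk : 0 < k) (K : ℕ → ℕ → ℝ) (h1 : K (k-1) (k-1) = 1)
    (S : Fin n → Fin n → Prop)
    (hS : ∀ (i j i' j' : Fin n), (i':ℕ) ≤ (i:ℕ) → (j':ℕ) ≤ (j:ℕ) → S i j → S i' j')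
    (X : Fin n → Fin n → ℝ)
    (hX : ∀ i j, S i j → tlConv n k K X i j = 0) :
    ∀ i j, S i j → X i j = 0 := by
  suffices h : ∀ d : ℕ, ∀ i j : Fin n, (i:ℕ)+(j:ℕ) = d → S i j → X i j = 0 by
    exact fun i j hs => h _ i j rfl hs
  intro d
  induction d using Nat.strong_induction_on with
  | _ d ih =>
    intro i j hd hs
    have h0 := hX i j hs
    rw [tlConv_eq n k hk K h1] at h0
    have hz : ∀ pq ∈ ((Finset.range k ×ˢ Finset.range k).erase (0,0)),
        (if pq.1 ≤ (i:ℕ) ∧ pq.2 ≤ (j:ℕ) then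
          X ⟨(i:ℕ) - pq.1, Nat.lt_of_le_of_lt (Nat.sub_le _ _) i.isLt⟩
            ⟨(j:ℕ) - pq.2, Nat.lt_of_le_of_lt (Nat.sub_le _ _) j.isLt⟩ *
            K (k - 1 - pq.1) (k - 1 - pq.2)
        else 0) = 0 := by
      intro pq hpq
      have hne : pq ≠ (0,0) := (Finset.mem_erase.mp hpq).1
      split
      · next hle =>
        have hne' : pq.1 ≠ 0 ∨ pq.2 ≠ 0 := by
          by_contra hc
          push_neg at hc
          exact hne (Prod.ext hc.1 hc.2)
        have hlt : ((i:ℕ) - pq.1) + ((j:ℕ) - pq.2) < d := by omega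
        have hX0 : X ⟨(i:ℕ) - pq.1, Nat.lt_of_le_of_lt (Nat.sub_le _ _) i.isLt⟩
            ⟨(j:ℕ) - pq.2, Nat.lt_of_le_of_lt (Nat.sub_le _ _) j.isLt⟩ = 0 := by
          refine ih _ hlt _ _ rfl ?_
          exact hS i j _ _ (Nat.sub_le _ _) (Nat.sub_le _ _) hs
        rw [hX0, zero_mul]
      · rfl
    rw [Finset.sum_eq_zero hz, add_zero] at h0
    exact h0

def tlConvL (n k : ℕ) (K : ℕ → ℕ → ℝ) :
    (Fin n → Fin n → ℝ) →ₗ[ℝ] (Fin n → Fin n → ℝ) where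
  toFun X := tlConv n k K X
  map_add' X X' := by
    funext i j
    show tlConv n k K (X + X') i j = tlConv n k K X i j + tlConv n k K X' i j
    unfold tlConv
    rw [← Finset.sum_add_distrib]
    refine Finset.sum_congr rfl fun p _ => ?_
    rw [← Finset.sum_add_distrib]
    refine Finset.sum_congr rfl fun q _ => ?_
    split <;> simp [add_mul]
  map_smul' r X := by
    funext i j
    show tlConv n k K (r • X) i j = r * tlConv n k K X i j
    unfold tlConv
    rw [Finset.mul_sum]
    refine Finset.sum_congr rfl fun p _ => ?_
    rw [Finset.mul_sum]
    refine Finset.sum_congr rfl fun q _ => ?_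
    split <;> simp [mul_assoc]

lemma tlConvL_bij (n k : ℕ) (hk : 0 < k) (K : ℕ → ℕ → ℝ) (h1 : K (k-1) (k-1) = 1) :
    Function.Bijective (tlConvL n k K) := by
  have hinj : Function.Injective (tlConvL n k K) := by
    intro X X' h
    have h0 : tlConvL n k K (X - X') = 0 := by rw [map_sub, h, sub_self]
    have := tlConv_vanish n k hk K h1 (fun _ _ => True) (fun _ _ _ _ _ _ _ => trivial)
      (X - X') (fun i j _ => by
        exact congrFun (congrFun h0 i) j)
    funext i j
    have := this i j trivial
    simpa [sub_eq_zero] using this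
  exact ⟨hinj, (LinearMap.injective_iff_surjective).mp hinj⟩

/-- with `K (k-1) (k-1) = 1`, for every output `Y` the recursion has a
solution `X`, the solution is unique, and each `X i j` is a linear function of the
values `Y i' j'` with `i' ≤ i` and `j' ≤ j` (with coefficients independent of `Y`). -/
theorem tlConv_inverse_exists_unique_linear (n k : ℕ) (hk : 0 < k) (K : ℕ → ℕ → ℝ)
    (h1 : K (k - 1) (k - 1) = 1) :
    (∀ Y : Fin n → Fin n → ℝ, ∃! X : Fin n → Fin n → ℝ, tlConv n k K X = Y) ∧
    (∃ c : (Fin n × Fin n) → (Fin n × Fin n) → ℝ,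
      (∀ a b : Fin n × Fin n, c a b ≠ 0 → b.1 ≤ a.1 ∧ b.2 ≤ a.2) ∧
      ∀ Y : Fin n → Fin n → ℝ,
        tlConv n k K
          (fun i j => ∑ b : Fin n × Fin n, c (i, j) b * Y b.1 b.2) = Y) := by
  have hbij := tlConvL_bij n k hk K h1
  set e := LinearEquiv.ofBijective (tlConvL n k K) hbij with he
  have heapp : ∀ X, e X = tlConv n k K X := fun X => rfl
  constructor
  · intro Y
    refine ⟨e.symm Y, ?_, ?_⟩
    · show tlConv n k K (e.symm Y) = Y
      rw [← heapp, e.apply_symm_apply]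
    · intro X hX
      apply e.injective
      rw [heapp, hX, e.apply_symm_apply]
  · -- delta functions
    set δ : Fin n × Fin n → (Fin n → Fin n → ℝ) :=
      fun b i j => if i = b.1 ∧ j = b.2 then 1 else 0 with hδ
    refine ⟨fun a b => e.symm (δ b) a.1 a.2, ?_, ?_⟩
    · intro a b hne
      by_contra hle
      apply hne
      refine tlConv_vanish n k hk K h1
        (fun i j => ¬ (b.1 ≤ i ∧ b.2 ≤ j)) ?_ (e.symm (δ b)) ?_ a.1 a.2 ?_
      · intro i j i' j' hi hj h hcon
        exact h ⟨le_trans hcon.1 (Fin.le_def.mpr hi), le_trans hcon.2 (Fin.le_def.mpr hj)⟩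
      · intro i j hS
        have : tlConv n k K (e.symm (δ b)) = δ b := by
          rw [← heapp, e.apply_symm_apply]
        rw [this]
        simp only [hδ]
        rw [if_neg]
        rintro ⟨rfl, rfl⟩
        exact hS ⟨le_refl _, le_refl _⟩
      · exact hle
    · intro Y
      have hY : Y = ∑ b : Fin n × Fin n, Y b.1 b.2 • δ b := by
        funext i j
        rw [Finset.sum_apply, Finset.sum_apply]
        rw [Finset.sum_eq_single (i, j)]
        · simp [hδ]
        · intro b _ hb
          simp only [hδ, Pi.smul_apply, smul_eq_mul]
          rw [if_neg, mul_zero]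
          rintro ⟨rfl, rfl⟩
          exact hb rfl
        · intro h; exact absurd (Finset.mem_univ _) h
      have hfun : (fun i j => ∑ b : Fin n × Fin n, e.symm (δ b) (i, j).1 (i, j).2 * Y b.1 b.2)
          = e.symm Y := by
        conv_rhs => rw [hY]
        rw [map_sum]
        funext i j
        rw [Finset.sum_apply, Finset.sum_apply]
        refine Finset.sum_congr rfl fun b _ => ?_
        rw [map_smul]
        simp [mul_comm]
      rw [hfun, ← heapp, e.apply_symm_apply]
end
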